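/- Suppose for all x, P(Y₀=1 | D=1, X=x) > 0, Y₀ ⫫ D | X, and X ⫫ D | Y₀=1. Then P(T=1 | Y₀=1, D=1) ≥ E[ max{0, (P(T=1 | D=1, X) + P(Y₀=1 | D=0, X) − 1) / P(Y₀=1 | D=0, X)} | Y₀=1, D=0 ]. -/

import Mathlib

open MeasureTheory

/-- Conditional probability `P(A | B) = P(A ∩ B) / P(B)` as a real number. -/
noncomputable def condP {Ω : Type*} [MeasurableSpace Ω] (μ : Measure Ω) (A B : Set Ω) : ℝ :=
  (μ (A ∩ B)).toReal / (μ B).toReal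

/-- If `p/q = (r/q)·(s/q)` then `p/s = r/q`. -/
lemma ratio_eq {p q r s : ℝ} (hq : q ≠ 0) (hs : s ≠ 0)
    (h : p / q = r / q * (s / q)) : p / s = r / q := by
  rw [div_eq_div_iff hs hq]
  field_simp at h
  exact mul_right_cancel₀ hq (by rw [h])

/-- Fréchet-type inequality for measures of intersections. -/
lemma frechet_real {Ω : Type*} [MeasurableSpace Ω] (μ : Measure Ω) [IsProbabilityMeasure μ]
    (A B E : Set Ω) (hB : MeasurableSet B) (hE : MeasurableSet E) :
    (μ (A ∩ E)).toReal + (μ (B ∩ E)).toReal ≤ (μ (A ∩ B ∩ E)).toReal + (μ E).toReal := by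
  have h1 : μ (A ∩ E) + μ (B ∩ E) = μ ((A ∩ E) ∪ (B ∩ E)) + μ ((A ∩ E) ∩ (B ∩ E)) :=
    (measure_union_add_inter _ (hB.inter hE)).symm
  have h2 : (A ∩ E) ∩ (B ∩ E) = A ∩ B ∩ E := by ext ω; simp; tauto
  have h3 : μ ((A ∩ E) ∪ (B ∩ E)) ≤ μ E := measure_mono (by rintro ω (h | h) <;> exact h.2)
  have h4 : μ (A ∩ E) + μ (B ∩ E) ≤ μ (A ∩ B ∩ E) + μ E := by
    rw [h1, h2]; exact (add_le_add_left h3 _).trans_eq (add_comm _ _)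
  have h5 := ENNReal.toReal_mono (by finiteness) h4
  rw [ENNReal.toReal_add (by finiteness) (by finiteness),
    ENNReal.toReal_add (by finiteness) (by finiteness)] at h5
  exact h5

/-- Law of total probability over the fibers of a finitely-valued map. -/
lemma sum_fibers_real {Ω ι : Type*} [MeasurableSpace Ω] [Fintype ι]
    (μ : Measure Ω) [IsProbabilityMeasure μ]
    (X : Ω → ι) (hXm : ∀ x : ι, MeasurableSet {ω | X ω = x})
    (S : Set Ω) (hS : MeasurableSet S) :
    ∑ x : ι, (μ (S ∩ {ω | X ω = x})).toReal = (μ S).toReal := by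
  have h1 : ⋃ x, S ∩ {ω | X ω = x} = S := by ext ω; simp
  have hdisj : Pairwise (Function.onFun Disjoint fun x => S ∩ {ω | X ω = x}) := by
    intro i j hij
    simp only [Function.onFun]
    apply Set.disjoint_left.mpr
    rintro ω ⟨_, hi⟩ ⟨_, hj⟩
    exact hij (by rw [← hi, ← hj])
  have h2 : μ S = ∑ x : ι, μ (S ∩ {ω | X ω = x}) := by
    conv_lhs => rw [← h1]
    rw [measure_iUnion hdisj (fun x => hS.inter (hXm x)), tsum_fintype]
  rw [h2, ENNReal.toReal_sum (fun x _ => measure_ne_top μ _)]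

/-- Lower bound under arbitrary unmeasured confounding:
`P(T=1 | Y₀=1, D=1) ≥ E[max{0, (P(T=1|D=1,X) + P(Y₀=1|D=0,X) − 1)/P(Y₀=1|D=0,X)} | Y₀=1, D=0]`. -/
theorem partial_identification_lower_bound
    {Ω ι : Type*} [MeasurableSpace Ω] [Fintype ι]
    (μ : Measure Ω) [IsProbabilityMeasure μ]
    (T Y0 D : Ω → ℕ) (X : Ω → ι)
    (hTm : Measurable T) (hY0m : Measurable Y0) (hDm : Measurable D)
    (hXm : ∀ x : ι, MeasurableSet {ω | X ω = x})
    (hTbin : ∀ ω, T ω = 0 ∨ T ω = 1)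
    (hY0bin : ∀ ω, Y0 ω = 0 ∨ Y0 ω = 1)
    (hDbin : ∀ ω, D ω = 0 ∨ D ω = 1)
    -- stable baseline risk: Y₀ ⫫ D | X
    (hSBR : ∀ (x : ι) (i j : ℕ),
      condP μ ({ω | Y0 ω = i} ∩ {ω | D ω = j}) {ω | X ω = x} =
        condP μ {ω | Y0 ω = i} {ω | X ω = x} * condP μ {ω | D ω = j} {ω | X ω = x})
    -- covariate stability: X ⫫ D | Y₀ = 1
    (hCS : ∀ (x : ι) (j : ℕ),
      condP μ ({ω | X ω = x} ∩ {ω | D ω = j}) {ω | Y0 ω = 1} =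
        condP μ {ω | X ω = x} {ω | Y0 ω = 1} * condP μ {ω | D ω = j} {ω | Y0 ω = 1})
    -- positivity: P(Y₀ = 1 | D = 1, X = x) > 0 and well-definedness of conditionals
    (hposY1 : ∀ x : ι, 0 < condP μ {ω | Y0 ω = 1} ({ω | D ω = 1} ∩ {ω | X ω = x}))
    (hposY0 : ∀ x : ι, 0 < condP μ {ω | Y0 ω = 1} ({ω | D ω = 0} ∩ {ω | X ω = x}))
    (hpos1 : 0 < μ ({ω | Y0 ω = 1} ∩ {ω | D ω = 1}))
    (hpos0 : 0 < μ ({ω | Y0 ω = 1} ∩ {ω | D ω = 0}))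
    (hposY : 0 < μ {ω | Y0 ω = 1})
    (hposx1 : ∀ x : ι, 0 < μ ({ω | D ω = 1} ∩ {ω | X ω = x}))
    (hposx0 : ∀ x : ι, 0 < μ ({ω | D ω = 0} ∩ {ω | X ω = x}))
    (hposx : ∀ x : ι, 0 < μ {ω | X ω = x}) :
    (∑ x : ι, max 0
          ((condP μ {ω | T ω = 1} ({ω | D ω = 1} ∩ {ω | X ω = x}) +
              condP μ {ω | Y0 ω = 1} ({ω | D ω = 0} ∩ {ω | X ω = x}) - 1) /
            condP μ {ω | Y0 ω = 1} ({ω | D ω = 0} ∩ {ω | X ω = x})) *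
        condP μ {ω | X ω = x} ({ω | Y0 ω = 1} ∩ {ω | D ω = 0})) ≤
      condP μ {ω | T ω = 1} ({ω | Y0 ω = 1} ∩ {ω | D ω = 1}) := by
  classical
  have hfpos : ∀ A : Set Ω, 0 < μ A → 0 < (μ A).toReal :=
    fun A h => ENNReal.toReal_pos h.ne' (measure_ne_top μ A)
  have mT1 : MeasurableSet {ω | T ω = 1} := hTm (measurableSet_singleton 1)
  have mY1 : MeasurableSet {ω | Y0 ω = 1} := hY0m (measurableSet_singleton 1)
  have mD1 : MeasurableSet {ω | D ω = 1} := hDm (measurableSet_singleton 1)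
  -- b = c : conditional baseline risk does not depend on treatment group
  have hbc : ∀ (x : ι) (j : ℕ), 0 < μ ({ω | D ω = j} ∩ {ω | X ω = x}) →
      condP μ {ω | Y0 ω = 1} ({ω | D ω = j} ∩ {ω | X ω = x}) =
        condP μ {ω | Y0 ω = 1} {ω | X ω = x} := by
    intro x j hpos
    have h := hSBR x 1 j
    simp only [condP] at h ⊢
    have hq : (μ {ω | X ω = x}).toReal ≠ 0 := (hfpos _ (hposx x)).ne'
    have hs : (μ ({ω | D ω = j} ∩ {ω | X ω = x})).toReal ≠ 0 := (hfpos _ hpos).ne'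
    have e1 : ({ω | Y0 ω = 1} ∩ {ω | D ω = j}) ∩ {ω | X ω = x} =
        {ω | Y0 ω = 1} ∩ ({ω | D ω = j} ∩ {ω | X ω = x}) := Set.inter_assoc _ _ _
    rw [e1] at h
    exact ratio_eq hq hs h
  -- w = v : conditional covariate distribution does not depend on treatment group
  have hw : ∀ (x : ι) (j : ℕ), 0 < μ ({ω | Y0 ω = 1} ∩ {ω | D ω = j}) →
      condP μ {ω | X ω = x} ({ω | Y0 ω = 1} ∩ {ω | D ω = j}) =
        condP μ {ω | X ω = x} {ω | Y0 ω = 1} := by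
    intro x j hpos
    have h := hCS x j
    simp only [condP] at h ⊢
    have hq : (μ {ω | Y0 ω = 1}).toReal ≠ 0 := (hfpos _ hposY).ne'
    have hs : (μ ({ω | Y0 ω = 1} ∩ {ω | D ω = j})).toReal ≠ 0 := (hfpos _ hpos).ne'
    have e2 : ({ω | X ω = x} ∩ {ω | D ω = j}) ∩ {ω | Y0 ω = 1} =
        {ω | X ω = x} ∩ ({ω | Y0 ω = 1} ∩ {ω | D ω = j}) := by ext ω; simp; tauto
    have e3 : {ω | D ω = j} ∩ {ω | Y0 ω = 1} = {ω | Y0 ω = 1} ∩ {ω | D ω = j} :=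
      Set.inter_comm _ _
    rw [e2, e3] at h
    exact ratio_eq hq hs h
  set S : Set Ω := {ω | T ω = 1} ∩ ({ω | Y0 ω = 1} ∩ {ω | D ω = 1}) with hSdef
  have mS : MeasurableSet S := mT1.inter (mY1.inter mD1)
  have hdn : 0 < (μ ({ω | Y0 ω = 1} ∩ {ω | D ω = 1})).toReal := hfpos _ hpos1
  -- key pointwise bound
  have key : ∀ x : ι, max 0
        ((condP μ {ω | T ω = 1} ({ω | D ω = 1} ∩ {ω | X ω = x}) +
            condP μ {ω | Y0 ω = 1} ({ω | D ω = 0} ∩ {ω | X ω = x}) - 1) /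
          condP μ {ω | Y0 ω = 1} ({ω | D ω = 0} ∩ {ω | X ω = x})) *
        condP μ {ω | X ω = x} ({ω | Y0 ω = 1} ∩ {ω | D ω = 0}) ≤
      (μ (S ∩ {ω | X ω = x})).toReal / (μ ({ω | Y0 ω = 1} ∩ {ω | D ω = 1})).toReal := by
    intro x
    -- replace b by c and w by v
    have hb : condP μ {ω | Y0 ω = 1} ({ω | D ω = 0} ∩ {ω | X ω = x}) =
        condP μ {ω | Y0 ω = 1} ({ω | D ω = 1} ∩ {ω | X ω = x}) := by
      rw [hbc x 0 (hposx0 x), hbc x 1 (hposx1 x)]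
    have hwv : condP μ {ω | X ω = x} ({ω | Y0 ω = 1} ∩ {ω | D ω = 0}) =
        condP μ {ω | X ω = x} ({ω | Y0 ω = 1} ∩ {ω | D ω = 1}) := by
      rw [hw x 0 hpos0, hw x 1 hpos1]
    rw [hb, hwv]
    simp only [condP]
    set E : Set Ω := {ω | D ω = 1} ∩ {ω | X ω = x} with hEdef
    have hm : 0 < (μ E).toReal := hfpos _ (hposx1 x)
    have hnY : 0 < (μ ({ω | Y0 ω = 1} ∩ E)).toReal := by
      have h := hposY1 x
      simp only [condP, ← hEdef] at h
      have h2 := mul_pos h hm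
      rwa [div_mul_cancel₀ _ hm.ne'] at h2
    have hSX : S ∩ {ω | X ω = x} = {ω | T ω = 1} ∩ {ω | Y0 ω = 1} ∩ E := by
      ext ω; simp only [hSdef, hEdef, Set.mem_inter_iff, Set.mem_setOf_eq]; tauto
    have hXY : {ω | X ω = x} ∩ ({ω | Y0 ω = 1} ∩ {ω | D ω = 1}) = {ω | Y0 ω = 1} ∩ E := by
      ext ω; simp only [hEdef, Set.mem_inter_iff, Set.mem_setOf_eq]; tauto
    have hfr : (μ ({ω | T ω = 1} ∩ E)).toReal + (μ ({ω | Y0 ω = 1} ∩ E)).toReal ≤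
        (μ (S ∩ {ω | X ω = x})).toReal + (μ E).toReal := by
      rw [hSX]
      exact frechet_real μ _ _ _ mY1 (mD1.inter (hXm x))
    have hq0 : (0 : ℝ) ≤ (μ (S ∩ {ω | X ω = x})).toReal := ENNReal.toReal_nonneg
    have stepA : max 0
        (((μ ({ω | T ω = 1} ∩ E)).toReal / (μ E).toReal +
            (μ ({ω | Y0 ω = 1} ∩ E)).toReal / (μ E).toReal - 1) /
          ((μ ({ω | Y0 ω = 1} ∩ E)).toReal / (μ E).toReal)) ≤
        (μ (S ∩ {ω | X ω = x})).toReal / (μ ({ω | Y0 ω = 1} ∩ E)).toReal := by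
      apply max_le (div_nonneg hq0 hnY.le)
      have heq : ((μ ({ω | T ω = 1} ∩ E)).toReal / (μ E).toReal +
            (μ ({ω | Y0 ω = 1} ∩ E)).toReal / (μ E).toReal - 1) /
          ((μ ({ω | Y0 ω = 1} ∩ E)).toReal / (μ E).toReal) =
          ((μ ({ω | T ω = 1} ∩ E)).toReal + (μ ({ω | Y0 ω = 1} ∩ E)).toReal -
            (μ E).toReal) / (μ ({ω | Y0 ω = 1} ∩ E)).toReal := by
        field_simp
      rw [heq]
      exact (div_le_div_iff_of_pos_right hnY).mpr (by linarith [hfr])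
    rw [hXY]
    calc max 0
          (((μ ({ω | T ω = 1} ∩ E)).toReal / (μ E).toReal +
              (μ ({ω | Y0 ω = 1} ∩ E)).toReal / (μ E).toReal - 1) /
            ((μ ({ω | Y0 ω = 1} ∩ E)).toReal / (μ E).toReal)) *
          ((μ ({ω | Y0 ω = 1} ∩ E)).toReal / (μ ({ω | Y0 ω = 1} ∩ {ω | D ω = 1})).toReal) ≤
        ((μ (S ∩ {ω | X ω = x})).toReal / (μ ({ω | Y0 ω = 1} ∩ E)).toReal) *
          ((μ ({ω | Y0 ω = 1} ∩ E)).toReal / (μ ({ω | Y0 ω = 1} ∩ {ω | D ω = 1})).toReal) :=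
        mul_le_mul_of_nonneg_right stepA (div_nonneg hnY.le hdn.le)
      _ = (μ (S ∩ {ω | X ω = x})).toReal / (μ ({ω | Y0 ω = 1} ∩ {ω | D ω = 1})).toReal := by
        field_simp
  -- sum the pointwise bounds
  have final : (∑ x : ι, max 0
        ((condP μ {ω | T ω = 1} ({ω | D ω = 1} ∩ {ω | X ω = x}) +
            condP μ {ω | Y0 ω = 1} ({ω | D ω = 0} ∩ {ω | X ω = x}) - 1) /
          condP μ {ω | Y0 ω = 1} ({ω | D ω = 0} ∩ {ω | X ω = x})) *
        condP μ {ω | X ω = x} ({ω | Y0 ω = 1} ∩ {ω | D ω = 0})) ≤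
      (μ S).toReal / (μ ({ω | Y0 ω = 1} ∩ {ω | D ω = 1})).toReal := by
    calc (∑ x : ι, max 0
          ((condP μ {ω | T ω = 1} ({ω | D ω = 1} ∩ {ω | X ω = x}) +
              condP μ {ω | Y0 ω = 1} ({ω | D ω = 0} ∩ {ω | X ω = x}) - 1) /
            condP μ {ω | Y0 ω = 1} ({ω | D ω = 0} ∩ {ω | X ω = x})) *
          condP μ {ω | X ω = x} ({ω | Y0 ω = 1} ∩ {ω | D ω = 0})) ≤
        ∑ x : ι, (μ (S ∩ {ω | X ω = x})).toReal /
          (μ ({ω | Y0 ω = 1} ∩ {ω | D ω = 1})).toReal :=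
        Finset.sum_le_sum fun x _ => key x
      _ = (∑ x : ι, (μ (S ∩ {ω | X ω = x})).toReal) /
          (μ ({ω | Y0 ω = 1} ∩ {ω | D ω = 1})).toReal := by rw [Finset.sum_div]
      _ = (μ S).toReal / (μ ({ω | Y0 ω = 1} ∩ {ω | D ω = 1})).toReal := by
        rw [sum_fibers_real μ X hXm S mS]
  have hrhs : condP μ {ω | T ω = 1} ({ω | Y0 ω = 1} ∩ {ω | D ω = 1}) =
      (μ S).toReal / (μ ({ω | Y0 ω = 1} ∩ {ω | D ω = 1})).toReal := rfl
  rw [hrhs]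
  exact final
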